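/- Let (R, m, k) be a commutative noetherian local ring that is m-adically complete, and let A be a Noether R-algebra. Then the contravariant functor Hom_R(-, E_R(k)) sends finitely generated right A-modules to artinian left A-modules and artinian left A-modules to finitely generated right A-modules, and the two induced contravariant functors between the category of finitely generated right A-modules and the category of artinian left A-modules are mutually quasi-inverse dualities (i.e., the canonical evaluation maps M → Hom_R(Hom_R(M, E_R(k)), E_R(k)) are isomorphisms for M in either category). -/

import Mathlib

/-!
Common definitions: module-theoretic notions over a (possibly noncommutative) ring,
notions relative to a central base ring, and Hom-module structures.
Right `A`-modules are treated as left `Aᵐᵒᵖ`-modules.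
-/

universe u

open MulOpposite

section AnyRing

variable {S : Type u} [Ring S]

/-- Flatness of a left `S`-module, via the standard equational criterion. -/
def ModFlat (S : Type u) [Ring S] (M : Type u) [AddCommGroup M] [Module S M] : Prop :=
  ∀ (n : ℕ) (a : Fin n → S) (x : Fin n → M), ∑ i, a i • x i = 0 →
    ∃ (m : ℕ) (b : Fin n → Fin m → S) (y : Fin m → M),
      (∀ i, x i = ∑ j, b i j • y j) ∧ ∀ j, ∑ i, a i * b i j = 0

/-- `M` is cotorsion: every extension of a flat module by `M` splits
(equivalently, `Ext¹(F, M) = 0` for all flat `F`). -/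
def ModCotorsion (S : Type u) [Ring S] (M : Type u) [AddCommGroup M] [Module S M] : Prop :=
  ∀ (X : Type u) [AddCommGroup X] [Module S X], ∀ i : M →ₗ[S] X,
    Function.Injective i → ModFlat S (X ⧸ LinearMap.range i) →
      ∃ r : X →ₗ[S] M, r ∘ₗ i = LinearMap.id

/-- `M` is flat cotorsion. -/
def ModFlatCotorsion (S : Type u) [Ring S] (M : Type u) [AddCommGroup M] [Module S M] : Prop :=
  ModFlat S M ∧ ModCotorsion S M

/-- `f : F → M` is a flat cover: `F` is flat, every map from a flat module to `M`
factors through `f`, and `f` is right minimal. -/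
def IsFlatCover {F M : Type u} [AddCommGroup F] [Module S F] [AddCommGroup M] [Module S M]
    (f : F →ₗ[S] M) : Prop :=
  ModFlat S F ∧
    (∀ (G : Type u) [AddCommGroup G] [Module S G], ModFlat S G →
      ∀ g : G →ₗ[S] M, ∃ h : G →ₗ[S] F, f ∘ₗ h = g) ∧
    ∀ g : F →ₗ[S] F, f ∘ₗ g = f → Function.Bijective g

/-- `f : M → I` is an injective envelope: an essential monomorphism into an
injective module. -/
def IsInjEnvelope {M I : Type u} [AddCommGroup M] [Module S M] [AddCommGroup I] [Module S I]
    (f : M →ₗ[S] I) : Prop :=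
  Function.Injective f ∧ Module.Injective S I ∧
    ∀ K : Submodule S I, K ⊓ LinearMap.range f = ⊥ → K = ⊥

/-- `f` is a pure monomorphism: injective, and every finite system of linear
equations with constants in `M` solvable in `N` is solvable in `M`. -/
def IsPureMono {M N : Type u} [AddCommGroup M] [Module S M] [AddCommGroup N] [Module S N]
    (f : M →ₗ[S] N) : Prop :=
  Function.Injective f ∧
    ∀ (k n : ℕ) (a : Fin k → Fin n → S) (c : Fin n → M),
      (∃ x : Fin k → N, ∀ j, f (c j) = ∑ i, a i j • x i) →
        ∃ y : Fin k → M, ∀ j, c j = ∑ i, a i j • y i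

/-- `M` is pure-injective. -/
def ModPureInjective (S : Type u) [Ring S] (M : Type u) [AddCommGroup M] [Module S M] : Prop :=
  ∀ (X Y : Type u) [AddCommGroup X] [Module S X] [AddCommGroup Y] [Module S Y],
    ∀ f : X →ₗ[S] Y, IsPureMono f → ∀ g : X →ₗ[S] M, ∃ h : Y →ₗ[S] M, h ∘ₗ f = g

/-- `f : M → H` is a pure-injective envelope: a left minimal pure monomorphism into a
pure-injective module. -/
def IsPureInjEnvelope {M H : Type u} [AddCommGroup M] [Module S M] [AddCommGroup H] [Module S H]
    (f : M →ₗ[S] H) : Prop :=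
  IsPureMono f ∧ ModPureInjective S H ∧ ∀ g : H →ₗ[S] H, g ∘ₗ f = f → Function.Bijective g

/-- `f : M → C` is a cotorsion envelope: a left minimal monomorphism into a cotorsion
module through which every map from `M` to a cotorsion module factors. -/
def IsCotorsionEnvelope {M C : Type u} [AddCommGroup M] [Module S M] [AddCommGroup C] [Module S C]
    (f : M →ₗ[S] C) : Prop :=
  Function.Injective f ∧ ModCotorsion S C ∧
    (∀ (C' : Type u) [AddCommGroup C'] [Module S C'], ModCotorsion S C' →
      ∀ g : M →ₗ[S] C', ∃ h : C →ₗ[S] C', h ∘ₗ f = g) ∧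
    ∀ g : C →ₗ[S] C, g ∘ₗ f = f → Function.Bijective g

/-- An indecomposable module: nontrivial, and with no nontrivial direct sum
decomposition. -/
def ModIndecomposable (S : Type u) [Ring S] (M : Type u) [AddCommGroup M] [Module S M] : Prop :=
  Nontrivial M ∧ ∀ N N' : Submodule S M, IsCompl N N' → N = ⊥ ∨ N' = ⊥

/-- A prime two-sided ideal of a possibly noncommutative ring, encoded as a left ideal
that is closed under right multiplication and satisfies `aSb ⊆ P → a ∈ P ∨ b ∈ P`. -/
def IsPrimeTwoSided (P : Ideal S) : Prop :=
  P ≠ ⊤ ∧ (∀ a ∈ P, ∀ b : S, a * b ∈ P) ∧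
    ∀ a b : S, (∀ x : S, a * x * b ∈ P) → a ∈ P ∨ b ∈ P

/-- A maximal two-sided ideal: a proper two-sided ideal that is maximal among proper
two-sided ideals. -/
def IsMaximalTwoSided (P : Ideal S) : Prop :=
  (∀ a ∈ P, ∀ b : S, a * b ∈ P) ∧ P ≠ ⊤ ∧
    ∀ Q : Ideal S, (∀ a ∈ Q, ∀ b : S, a * b ∈ Q) → P < Q → Q = ⊤

/-- The submodule `M·J` of a right `S`-module generated by the products `x • a`, `a ∈ J`. -/
def setSMulSub (J : Set S) (M : Type u) [AddCommGroup M] [Module Sᵐᵒᵖ M] : Submodule Sᵐᵒᵖ M :=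
  Submodule.span Sᵐᵒᵖ {y | ∃ (x : M) (a : S), a ∈ J ∧ y = op a • x}

/-- The submodule of a right `S`-module annihilated by a set `J` closed under left
multiplication (e.g. a left or two-sided ideal); this realizes `Hom_S(S/J, M)`. -/
def setAnnSub (J : Set S) (hJ : ∀ c : S, ∀ a ∈ J, c * a ∈ J)
    (M : Type u) [AddCommGroup M] [Module Sᵐᵒᵖ M] : Submodule Sᵐᵒᵖ M where
  carrier := {x | ∀ a ∈ J, op a • x = 0}
  add_mem' := fun {x y} hx hy a ha => by rw [smul_add, hx a ha, hy a ha, add_zero]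
  zero_mem' := fun a _ => smul_zero _
  smul_mem' := fun c x hx a ha => by
    have h1 : (op a : Sᵐᵒᵖ) • c • x = op (c.unop * a) • x := by
      rw [smul_smul]; rfl
    rw [h1, hx _ (hJ c.unop a ha)]

/-- The Jacobson radical of a ring, as a set: the intersection of all maximal left
ideals (which coincides with the two-sided Jacobson radical). -/
def jacobsonSet (T : Type u) [Ring T] : Set T :=
  {a : T | ∀ J : Ideal T, J.IsMaximal → a ∈ J}

/-- The contraction `ρ⁻¹(rad T)` of the Jacobson radical along a ring homomorphism. -/
def radContraction {S T : Type u} [Ring S] [Ring T] (ρ : S →+* T) : Set S :=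
  ρ ⁻¹' jacobsonSet T

theorem radContraction_mul_mem {S T : Type u} [Ring S] [Ring T] (ρ : S →+* T)
    (c : S) (a : S) (ha : a ∈ radContraction ρ) : c * a ∈ radContraction ρ := by
  intro J hJ
  rw [map_mul]
  exact J.mul_mem_left _ (ha J hJ)

end AnyRing

section Base

variable {R : Type u} [CommRing R]

/-- `M` is `p`-local: every `s ∉ p` acts bijectively on `M`
(equivalently, `M → M_p` is an isomorphism). -/
def PLocal (p : Ideal R) (M : Type u) [AddCommGroup M] [Module R M] : Prop :=
  ∀ s ∉ p, Function.Bijective fun x : M => s • x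

/-- `M` is `a`-torsion. -/
def PTorsion (a : Ideal R) (M : Type u) [AddCommGroup M] [Module R M] : Prop :=
  ∀ x : M, ∃ n : ℕ, ∀ r ∈ a ^ n, r • x = 0

/-- `f : M → N` exhibits `N` as the localization of `M` at the prime `p`. -/
def IsLocalizationHom (p : Ideal R) {M N : Type u} [AddCommGroup M] [Module R M]
    [AddCommGroup N] [Module R N] (f : M →ₗ[R] N) : Prop :=
  (∀ s ∉ p, Function.Bijective fun y : N => s • y) ∧
    (∀ y : N, ∃ (x : M) (s : R), s ∉ p ∧ s • y = f x) ∧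
    ∀ x : M, f x = 0 → ∃ s ∉ p, s • x = 0

/-- The map induced by `f` on quotients modulo `a ^ n`. -/
noncomputable def quotPowMap (a : Ideal R) (n : ℕ) {M N : Type u} [AddCommGroup M] [Module R M]
    [AddCommGroup N] [Module R N] (f : M →ₗ[R] N) :
    (M ⧸ (a ^ n • ⊤ : Submodule R M)) →ₗ[R] N ⧸ (a ^ n • ⊤ : Submodule R N) :=
  Submodule.mapQ _ _ f <| by
    rw [← Submodule.map_le_iff_le_comap, Submodule.map_smul'']
    exact Submodule.smul_mono le_rfl le_top

/-- `f : M → N` exhibits `N` as the `a`-adic completion of `M`: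
`N` is `a`-adically complete and `f` induces isomorphisms modulo all powers of `a`. -/
def IsAdicCompletionHom (a : Ideal R) {M N : Type u} [AddCommGroup M] [Module R M]
    [AddCommGroup N] [Module R N] (f : M →ₗ[R] N) : Prop :=
  IsAdicComplete a N ∧ ∀ n : ℕ, Function.Bijective (quotPowMap a n f)

/-- A simple `p`-localized module: a right module over `T` (with central `R`-action) that
is `p`-local, annihilated by `P`, and simple over the localization `T_p` (expressed via
submodules closed under division by elements outside `p`). -/
def LocSimple {T : Type u} [Ring T] [Algebra R T] (p : Ideal R) (P : Set T)
    (S : Type u) [AddCommGroup S] [Module R S] [Module T S] [IsScalarTower R T S] : Prop :=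
  Nontrivial S ∧ PLocal p S ∧ (∀ a ∈ P, ∀ x : S, a • x = 0) ∧
    ∀ N : Submodule T S, (∀ s ∉ p, ∀ x : S, s • x ∈ N → x ∈ N) → N = ⊥ ∨ N = ⊤

/-- `M` is, in a `p`-local sense, a semisimple module over the localization at `p`:
it is `p`-local and the lattice of localized submodules is complemented. -/
def SemisimpleLoc {T : Type u} [Ring T] [Algebra R T] (p : Ideal R)
    (M : Type u) [AddCommGroup M] [Module R M] [Module T M] [IsScalarTower R T M] : Prop :=
  PLocal p M ∧
    ∀ N : Submodule T M, (∀ s ∉ p, ∀ x : M, s • x ∈ N → x ∈ N) →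
      ∃ N' : Submodule T M, (∀ s ∉ p, ∀ x : M, s • x ∈ N' → x ∈ N') ∧ IsCompl N N'

end Base

section SmulTop

variable {R A : Type u} [CommRing R] [Ring A] [Algebra R A]

/-- The image `a • M` of an ideal of `R` in a right `A`-module, as an `Aᵐᵒᵖ`-submodule. -/
def idealSMulSub (a : Ideal R) (M : Type u) [AddCommGroup M] [Module R M] [Module Aᵐᵒᵖ M]
    [IsScalarTower R Aᵐᵒᵖ M] : Submodule Aᵐᵒᵖ M where
  carrier := (a • (⊤ : Submodule R M) : Submodule R M)
  add_mem' := fun hx hy => Submodule.add_mem _ hx hy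
  zero_mem' := Submodule.zero_mem _
  smul_mem' := fun c x hx => by
    refine Submodule.smul_induction_on hx (fun r hr y _ => ?_) (fun u v hu hv => ?_)
    · rw [smul_comm]
      exact Submodule.smul_mem_smul hr Submodule.mem_top
    · rw [smul_add]
      exact Submodule.add_mem _ hu hv

end SmulTop

section HomModules

variable {S₀ T : Type u} [CommRing S₀] [Ring T]
variable {M E : Type u} [AddCommGroup M] [Module S₀ M] [AddCommGroup E] [Module S₀ E]

/-- If `M` is a left `T`-module then `Hom_{S₀}(M, E)` is a right `T`-module. -/
instance homRightSMul [Module T M] [SMulCommClass T S₀ M] : SMul Tᵐᵒᵖ (M →ₗ[S₀] E) :=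
  ⟨fun a f => f ∘ₗ DistribMulAction.toLinearMap S₀ M a.unop⟩

theorem homRight_smul_apply [Module T M] [SMulCommClass T S₀ M] (a : Tᵐᵒᵖ)
    (f : M →ₗ[S₀] E) (x : M) : (a • f) x = f (a.unop • x) := rfl

instance homRightModule [Module T M] [SMulCommClass T S₀ M] : Module Tᵐᵒᵖ (M →ₗ[S₀] E) where
  one_smul f := LinearMap.ext fun x => by rw [homRight_smul_apply, unop_one, one_smul]
  mul_smul a b f := LinearMap.ext fun x => by
    rw [homRight_smul_apply, homRight_smul_apply, homRight_smul_apply, unop_mul, mul_smul]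
  smul_zero a := LinearMap.ext fun x => rfl
  smul_add a f g := LinearMap.ext fun x => rfl
  add_smul a b f := LinearMap.ext fun x => by
    rw [homRight_smul_apply, unop_add, add_smul, map_add]; rfl
  zero_smul f := LinearMap.ext fun x => by
    rw [homRight_smul_apply, unop_zero, zero_smul, map_zero]; rfl

instance homRightTower [Module T M] [SMulCommClass T S₀ M] [Algebra S₀ T]
    [IsScalarTower S₀ T M] : IsScalarTower S₀ Tᵐᵒᵖ (M →ₗ[S₀] E) := by
  constructor
  intro r a f
  refine LinearMap.ext fun x => ?_
  rw [LinearMap.smul_apply, homRight_smul_apply, homRight_smul_apply, unop_smul,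
    smul_assoc, map_smul]

/-- If `M` is a right `T`-module then `Hom_{S₀}(M, E)` is a left `T`-module. -/
instance homLeftSMul [Module Tᵐᵒᵖ M] [SMulCommClass Tᵐᵒᵖ S₀ M] : SMul T (M →ₗ[S₀] E) :=
  ⟨fun a f => f ∘ₗ DistribMulAction.toLinearMap S₀ M (op a)⟩

theorem homLeft_smul_apply [Module Tᵐᵒᵖ M] [SMulCommClass Tᵐᵒᵖ S₀ M] (a : T)
    (f : M →ₗ[S₀] E) (x : M) : (a • f) x = f (op a • x) := rfl

instance homLeftModule [Module Tᵐᵒᵖ M] [SMulCommClass Tᵐᵒᵖ S₀ M] : Module T (M →ₗ[S₀] E) where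
  one_smul f := LinearMap.ext fun x => by rw [homLeft_smul_apply, op_one, one_smul]
  mul_smul a b f := LinearMap.ext fun x => by
    rw [homLeft_smul_apply, homLeft_smul_apply, homLeft_smul_apply, op_mul, mul_smul]
  smul_zero a := LinearMap.ext fun x => rfl
  smul_add a f g := LinearMap.ext fun x => rfl
  add_smul a b f := LinearMap.ext fun x => by
    rw [homLeft_smul_apply, op_add, add_smul, map_add]; rfl
  zero_smul f := LinearMap.ext fun x => by
    rw [homLeft_smul_apply, op_zero, zero_smul, map_zero]; rfl

instance homLeftTower [Module Tᵐᵒᵖ M] [SMulCommClass Tᵐᵒᵖ S₀ M] [Algebra S₀ T]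
    [IsScalarTower S₀ Tᵐᵒᵖ M] : IsScalarTower S₀ T (M →ₗ[S₀] E) := by
  constructor
  intro r a f
  refine LinearMap.ext fun x => ?_
  rw [LinearMap.smul_apply, homLeft_smul_apply, homLeft_smul_apply, op_smul,
    smul_assoc, map_smul]

end HomModules

section Bundled

/-- A bundled right `A`-module with compatible central `R`-action. -/
structure RightModule (R A : Type u) [CommRing R] [Ring A] [Algebra R A] :
    Type (u + 1) where
  carrier : Type u
  [addCommGroup : AddCommGroup carrier]
  [modA : Module Aᵐᵒᵖ carrier]
  [modR : Module R carrier]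
  [tower : IsScalarTower R Aᵐᵒᵖ carrier]

attribute [instance] RightModule.addCommGroup RightModule.modA RightModule.modR
  RightModule.tower

instance (R A : Type u) [CommRing R] [Ring A] [Algebra R A] :
    CoeSort (RightModule R A) (Type u) :=
  ⟨RightModule.carrier⟩

/-- A bundled left `A`-module with compatible central `R`-action. -/
structure LeftModule (R A : Type u) [CommRing R] [Ring A] [Algebra R A] :
    Type (u + 1) where
  carrier : Type u
  [addCommGroup : AddCommGroup carrier]
  [modA : Module A carrier]
  [modR : Module R carrier]
  [tower : IsScalarTower R A carrier]

attribute [instance] LeftModule.addCommGroup LeftModule.modA LeftModule.modR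
  LeftModule.tower

instance (R A : Type u) [CommRing R] [Ring A] [Algebra R A] :
    CoeSort (LeftModule R A) (Type u) :=
  ⟨LeftModule.carrier⟩

end Bundled

/-- A bundled module over a ring `S`. -/
structure ModuleOver (S : Type u) [Ring S] : Type (u + 1) where
  carrier : Type u
  [addCommGroup : AddCommGroup carrier]
  [mod : Module S carrier]

attribute [instance] ModuleOver.addCommGroup ModuleOver.mod

/-- The prime two-sided ideals of `A` lying over the prime `p` of `R`. -/
def PrimesOver (R A : Type u) [CommRing R] [Ring A] [Algebra R A] (p : Ideal R) : Type u :=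
  {P : Ideal A // IsPrimeTwoSided P ∧ P.comap (algebraMap R A) = p}

/-- The prime two-sided ideals of `A`. -/
def PrimesNC (A : Type u) [Ring A] : Type u := {P : Ideal A // IsPrimeTwoSided P}

/-- Precomposition with an `A`-linear map `ι : SL → I` of left `A`-modules, as an
`Aᵐᵒᵖ`-linear (right `A`-linear) map `Hom_R(I, F) → Hom_R(SL, F)`. -/
def precompHom {R A : Type u} [CommRing R] [Ring A] [Algebra R A]
    {SL I : Type u} [AddCommGroup SL] [Module R SL] [Module A SL] [IsScalarTower R A SL]
    [AddCommGroup I] [Module R I] [Module A I] [IsScalarTower R A I]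
    (ι : SL →ₗ[A] I)
    (F : Type u) [AddCommGroup F] [Module R F] :
    (I →ₗ[R] F) →ₗ[Aᵐᵒᵖ] (SL →ₗ[R] F) where
  toFun g := g ∘ₗ (ι.restrictScalars R)
  map_add' g h := LinearMap.ext fun _ => rfl
  map_smul' a g := LinearMap.ext fun x => by
    show g (a.unop • ι x) = g (ι (a.unop • x))
    exact congrArg g (ι.map_smul a.unop x).symm

section HomModules2

variable {S₀ T : Type u} [CommRing S₀] [Ring T]
variable {M E : Type u} [AddCommGroup M] [Module S₀ M] [AddCommGroup E] [Module S₀ E]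

instance homLeft_smulCommClass [Module Tᵐᵒᵖ M] [SMulCommClass Tᵐᵒᵖ S₀ M] :
    SMulCommClass T S₀ (M →ₗ[S₀] E) :=
  ⟨fun _ _ _ => LinearMap.ext fun _ => rfl⟩

instance homRight_smulCommClass [Module T M] [SMulCommClass T S₀ M] :
    SMulCommClass Tᵐᵒᵖ S₀ (M →ₗ[S₀] E) :=
  ⟨fun _ _ _ => LinearMap.ext fun _ => rfl⟩

instance homRight_smulCommClass' {S₁ : Type u} [Semiring S₁] [Module S₁ E]
    [SMulCommClass S₀ S₁ E] [Module T M] [SMulCommClass T S₀ M] :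
    SMulCommClass Tᵐᵒᵖ S₁ (M →ₗ[S₀] E) :=
  ⟨fun _ _ _ => LinearMap.ext fun _ => rfl⟩

end HomModules2

section Eval

variable (R A : Type u) [CommRing R] [Ring A] [Algebra R A]

/-- The evaluation map `M → Hom_R(Hom_R(M, E), E)` for a right `A`-module `M`,
as a map of right `A`-modules. -/
def evalRight (M : Type u) [AddCommGroup M] [Module R M] [Module Aᵐᵒᵖ M]
    [IsScalarTower R Aᵐᵒᵖ M] (E : Type u) [AddCommGroup E] [Module R E] :
    M →ₗ[Aᵐᵒᵖ] ((M →ₗ[R] E) →ₗ[R] E) where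
  toFun x :=
    { toFun := fun f => f x
      map_add' := fun _ _ => rfl
      map_smul' := fun _ _ => rfl }
  map_add' x y := LinearMap.ext fun f => f.map_add x y
  map_smul' a x := LinearMap.ext fun f => by
    show f (a • x) = f (op a.unop • x)
    rfl

/-- The evaluation map `N → Hom_R(Hom_R(N, E), E)` for a left `A`-module `N`,
as a map of left `A`-modules. -/
def evalLeft (N : Type u) [AddCommGroup N] [Module R N] [Module A N]
    [IsScalarTower R A N] (E : Type u) [AddCommGroup E] [Module R E] :
    N →ₗ[A] ((N →ₗ[R] E) →ₗ[R] E) where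
  toFun x :=
    { toFun := fun f => f x
      map_add' := fun _ _ => rfl
      map_smul' := fun _ _ => rfl }
  map_add' x y := LinearMap.ext fun f => f.map_add x y
  map_smul' a x := LinearMap.ext fun f => by
    show f (a • x) = f ((op a).unop • x)
    rfl

end Eval


section MatlisCore

open IsLocalRing

variable {R : Type u} [CommRing R] [IsLocalRing R]
variable {E : Type u} [AddCommGroup E] [Module R E]

/-- Evaluation-surjectivity of `M → Hom_R(Hom_R(M,E),E)`. -/
def EvalSurj (R : Type u) [CommRing R] (E : Type u) [AddCommGroup E] [Module R E]
    (M : Type u) [AddCommGroup M] [Module R M] : Prop :=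
  ∀ z : (M →ₗ[R] E) →ₗ[R] E, ∃ x : M, ∀ f : M →ₗ[R] E, z f = f x

theorem exists_extend (hE : Module.Injective R E) {M N : Type u} [AddCommGroup M] [Module R M]
    [AddCommGroup N] [Module R N] (ι : M →ₗ[R] N) (hι : Function.Injective ι)
    (g : M →ₗ[R] E) : ∃ h : N →ₗ[R] E, ∀ x, h (ι x) = g x :=
  hE.out ι hι g

/-- `E` is a cogenerator. -/
theorem exists_apply_ne_zero {e : ResidueField R →ₗ[R] E} (he : IsInjEnvelope e)
    {M : Type u} [AddCommGroup M] [Module R M] (x : M) (hx : x ≠ 0) :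
    ∃ f : M →ₗ[R] E, f x ≠ 0 := by
  classical
  set φ := LinearMap.toSpanSingleton R M x with hφ
  have h1 : φ 1 = x := by simp [hφ, LinearMap.toSpanSingleton_apply]
  have hne : LinearMap.ker φ ≠ ⊤ := by
    intro h
    have : (1 : R) ∈ LinearMap.ker φ := h ▸ Submodule.mem_top
    rw [LinearMap.mem_ker, h1] at this
    exact hx this
  have hle : LinearMap.ker φ ≤ maximalIdeal R := le_maximalIdeal hne
  set ψ : R →ₗ[R] E := e ∘ₗ Algebra.linearMap R (ResidueField R) with hψ
  have hker : LinearMap.ker φ ≤ LinearMap.ker ψ := by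
    intro r hr
    have : algebraMap R (ResidueField R) r = 0 := by
      rw [IsLocalRing.ResidueField.algebraMap_eq]
      exact Ideal.Quotient.eq_zero_iff_mem.2 (hle hr)
    rw [LinearMap.mem_ker, hψ, LinearMap.comp_apply, Algebra.linearMap_apply, this, map_zero]
  set σ := LinearMap.quotKerEquivRange φ
  set g0 : ↥(LinearMap.range φ) →ₗ[R] E :=
    ((LinearMap.ker φ).liftQ ψ hker) ∘ₗ (σ.symm : ↥(LinearMap.range φ) →ₗ[R] _) with hg0
  obtain ⟨f, hf⟩ := exists_extend he.2.1 (LinearMap.range φ).subtype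
    (Submodule.injective_subtype _) g0
  refine ⟨f, ?_⟩
  have hmem : x ∈ LinearMap.range φ := ⟨1, h1⟩
  have h2 : f x = g0 ⟨x, hmem⟩ := hf ⟨x, hmem⟩
  have h3 : σ.symm ⟨x, hmem⟩ = Submodule.Quotient.mk 1 := by
    rw [LinearEquiv.symm_apply_eq]
    apply Subtype.ext
    rw [LinearMap.quotKerEquivRange_apply_mk, h1]
  have h4 : g0 ⟨x, hmem⟩ = ψ 1 := by
    rw [hg0, LinearMap.comp_apply, LinearEquiv.coe_coe, h3, Submodule.liftQ_apply]
  have h5 : ψ 1 = e 1 := by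
    simp [hψ, Algebra.linearMap_apply, map_one]
  rw [h2, h4, h5]
  intro h0
  have : (1 : ResidueField R) = 0 := he.1 (by simpa using h0)
  exact one_ne_zero this

/-- Injectivity of the evaluation map. -/
theorem eval_injective {e : ResidueField R →ₗ[R] E} (he : IsInjEnvelope e)
    {M : Type u} [AddCommGroup M] [Module R M] {x : M}
    (h : ∀ f : M →ₗ[R] E, f x = 0) : x = 0 := by
  by_contra hx
  obtain ⟨f, hf⟩ := exists_apply_ne_zero he x hx
  exact hf (h f)

/-- Eval-surjectivity passes to quotients. -/
theorem EvalSurj.of_surjective (hE : Module.Injective R E) {M N : Type u}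
    [AddCommGroup M] [Module R M] [AddCommGroup N] [Module R N]
    (π : M →ₗ[R] N) (hπ : Function.Surjective π) (hM : EvalSurj R E M) :
    EvalSurj R E N := by
  intro z
  have hinj : Function.Injective (LinearMap.lcomp R E π) := by
    intro g g' h
    apply LinearMap.ext
    intro y
    obtain ⟨x, rfl⟩ := hπ y
    exact congrArg (fun u => u x) h
  obtain ⟨w, hw⟩ := exists_extend hE (LinearMap.lcomp R E π) hinj z
  obtain ⟨u, hu⟩ := hM w
  refine ⟨π u, fun g => ?_⟩
  have := hw g
  rw [← this]
  exact hu (g ∘ₗ π)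

theorem EvalSurj.congr (hE : Module.Injective R E) {M N : Type u}
    [AddCommGroup M] [Module R M] [AddCommGroup N] [Module R N]
    (σ : M ≃ₗ[R] N) (hM : EvalSurj R E M) : EvalSurj R E N :=
  EvalSurj.of_surjective hE (σ : M →ₗ[R] N) σ.surjective hM

theorem EvalSurj.of_subsingleton {M : Type u} [AddCommGroup M] [Module R M]
    [Subsingleton M] : EvalSurj R E M := by
  intro z
  refine ⟨0, fun f => ?_⟩
  have h1 : f = 0 := by
    apply LinearMap.ext
    intro x
    rw [Subsingleton.elim x 0, map_zero]
    rfl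
  rw [h1, map_zero]
  rfl

/-- Eval-surjectivity for finite powers. -/
theorem EvalSurj.pi (Q : Type u) [AddCommGroup Q] [Module R Q] (hQ : EvalSurj R E Q)
    (n : ℕ) : EvalSurj R E (Fin n → Q) := by
  classical
  intro z
  have key : ∀ i : Fin n, ∃ x : Q, ∀ g : Q →ₗ[R] E,
      z (g ∘ₗ LinearMap.proj i) = g x := by
    intro i
    exact hQ (z ∘ₗ LinearMap.lcomp R E (LinearMap.proj i))
  choose x hx using key
  refine ⟨x, fun f => ?_⟩
  have hsplit : f = ∑ i : Fin n, (f ∘ₗ LinearMap.single R (fun _ => Q) i) ∘ₗ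
      LinearMap.proj (φ := fun _ => Q) i := by
    apply LinearMap.ext
    intro w
    rw [LinearMap.sum_apply]
    have : ∑ i : Fin n, ((f ∘ₗ LinearMap.single R (fun _ => Q) i) ∘ₗ
        LinearMap.proj (φ := fun _ => Q) i) w
        = f (∑ i : Fin n, Pi.single i (w i)) := by
      rw [map_sum]
      rfl
    rw [this, Finset.univ_sum_single]
  calc z f = ∑ i : Fin n, z ((f ∘ₗ LinearMap.single R (fun _ => Q) i) ∘ₗ
        LinearMap.proj (φ := fun _ => Q) i) := by rw [← map_sum, ← hsplit]
    _ = ∑ i : Fin n, (f ∘ₗ LinearMap.single R (fun _ => Q) i) (x i) := by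
        refine Finset.sum_congr rfl fun i _ => hx i _
    _ = f (∑ i : Fin n, Pi.single i (x i)) := by rw [map_sum]; rfl
    _ = f x := by rw [Finset.univ_sum_single]

/-- Eval-surjectivity is closed under extensions. -/
theorem EvalSurj.extension (hE : Module.Injective R E) {L : Type u}
    [AddCommGroup L] [Module R L] (W : Submodule R L)
    (hW : EvalSurj R E ↥W) (hQ : EvalSurj R E (L ⧸ W)) : EvalSurj R E L := by
  intro z
  obtain ⟨xq, hxq⟩ := hQ (z ∘ₗ LinearMap.lcomp R E W.mkQ)
  obtain ⟨x₀, rfl⟩ := W.mkQ_surjective xq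
  set z₁ : (L →ₗ[R] E) →ₗ[R] E := z - LinearMap.applyₗ x₀ with hz₁
  have hvan : ∀ f : L →ₗ[R] E, f ∘ₗ W.subtype = 0 → z₁ f = 0 := by
    intro f hf
    have hker : W ≤ LinearMap.ker f := by
      intro w hw
      have := congrArg (fun u => u ⟨w, hw⟩) hf
      simpa using this
    have hfac : f = (W.liftQ f hker) ∘ₗ W.mkQ := (W.liftQ_mkQ f hker).symm
    rw [hz₁, LinearMap.sub_apply, hfac]
    have h1 := hxq (W.liftQ f hker)
    rw [LinearMap.comp_apply, LinearMap.lcomp_apply'] at h1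
    rw [h1]
    simp [LinearMap.applyₗ]
    exact sub_self _
  set ι' : (L →ₗ[R] E) →ₗ[R] (↥W →ₗ[R] E) := LinearMap.lcomp R E W.subtype with hι'
  have hsurj : Function.Surjective ι' := by
    intro h
    obtain ⟨f, hf⟩ := exists_extend hE W.subtype (Submodule.injective_subtype W) h
    exact ⟨f, LinearMap.ext hf⟩
  have hker' : LinearMap.ker ι' ≤ LinearMap.ker z₁ := by
    intro f hf
    exact hvan f hf
  set eqv := LinearMap.quotKerEquivOfSurjective ι' hsurj
  set z₁' : (↥W →ₗ[R] E) →ₗ[R] E :=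
    ((LinearMap.ker ι').liftQ z₁ hker') ∘ₗ (eqv.symm : (↥W →ₗ[R] E) →ₗ[R] _) with hz₁'
  have hfac' : ∀ f : L →ₗ[R] E, z₁' (ι' f) = z₁ f := by
    intro f
    have h1 : eqv (Submodule.Quotient.mk f) = ι' f := by
      simp [eqv, LinearMap.quotKerEquivOfSurjective, LinearEquiv.trans_apply,
        LinearEquiv.ofTop_apply, LinearMap.quotKerEquivRange_apply_mk]
    have h2 : eqv.symm (ι' f) = Submodule.Quotient.mk f := by
      rw [LinearEquiv.symm_apply_eq, h1]
    rw [hz₁', LinearMap.comp_apply, LinearEquiv.coe_coe, h2, Submodule.liftQ_apply]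
  obtain ⟨x', hx'⟩ := hW z₁'
  refine ⟨x₀ + (x' : L), fun f => ?_⟩
  have h3 : z₁ f = f (x' : L) := by
    rw [← hfac' f, hx' (ι' f)]
    rfl
  have h4 : z₁ f = z f - f x₀ := by
    rw [hz₁]; rfl
  have h5 : z f = f x₀ + f (x' : L) := by
    have : z f - f x₀ = f (x' : L) := by rw [← h4]; exact h3
    rw [← this]; abel
  rw [map_add, h5]

end MatlisCore


section MatlisTorsion

open IsLocalRing

variable {R : Type u} [CommRing R] [IsLocalRing R]
variable {E : Type u} [AddCommGroup E] [Module R E]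

/-- The `m`-power-torsion submodule of `E`. -/
def torsionSub (R : Type u) [CommRing R] [IsLocalRing R] (E : Type u) [AddCommGroup E]
    [Module R E] : Submodule R E where
  carrier := {x | ∃ n : ℕ, ∀ r ∈ maximalIdeal R ^ n, r • x = 0}
  add_mem' := by
    rintro x y ⟨n, hn⟩ ⟨m, hm⟩
    refine ⟨n + m, fun r hr => ?_⟩
    rw [smul_add, hn r (Ideal.pow_le_pow_right (Nat.le_add_right n m) hr),
      hm r (Ideal.pow_le_pow_right (Nat.le_add_left m n) hr), add_zero]
  zero_mem' := ⟨0, fun r _ => smul_zero r⟩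
  smul_mem' := by
    rintro c x ⟨n, hn⟩
    exact ⟨n, fun r hr => by rw [smul_comm, hn r hr, smul_zero]⟩

theorem torsion_baer [IsNoetherianRing R] (hE : Module.Injective R E) :
    Module.Baer R ↥(torsionSub R E) := by
  classical
  intro J g
  set gE : ↥J →ₗ[R] E := (torsionSub R E).subtype ∘ₗ g with hgE
  haveI : Module.Finite R ↥J := Module.Finite.iff_fg.2 (IsNoetherian.noetherian J)
  obtain ⟨nv, v, hv⟩ := Module.Finite.exists_fin (R := R) (M := ↥J)
  have hgen : ∀ i, ∃ t, ∀ r ∈ maximalIdeal R ^ t, r • gE (v i) = 0 := fun i => (g (v i)).2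
  choose tt htt using hgen
  set t := Finset.univ.sup tt with hdeft
  have huni : ∀ x : ↥J, ∀ r ∈ maximalIdeal R ^ t, r • gE x = 0 := by
    intro x
    have hx : x ∈ Submodule.span R (Set.range v) := hv ▸ Submodule.mem_top
    induction hx using Submodule.span_induction with
    | mem y hy =>
        obtain ⟨i, rfl⟩ := hy
        intro r hr
        exact htt i r (Ideal.pow_le_pow_right (Finset.le_sup (Finset.mem_univ i)) hr)
    | zero => intro r _; rw [map_zero, smul_zero]
    | add y z _ _ hy' hz' =>
        intro r hr
        rw [map_add, smul_add, hy' r hr, hz' r hr, add_zero]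
    | smul c y _ hy' =>
        intro r hr
        rw [map_smul, smul_comm, hy' r hr, smul_zero]
  obtain ⟨k, hk⟩ :=
    Ideal.exists_pow_inf_eq_pow_smul (maximalIdeal R) (M := R) (J : Submodule R R)
  have hsub : (maximalIdeal R ^ (t + k) • ⊤ ⊓ (J : Submodule R R)) ≤
      Submodule.map J.subtype (LinearMap.ker gE) := by
    rw [hk (t + k) (Nat.le_add_left k t), Nat.add_sub_cancel]
    refine Submodule.smul_le.2 ?_
    rintro r hr y hy
    have hyJ : y ∈ J := hy.2
    refine Submodule.mem_map.2 ⟨r • ⟨y, hyJ⟩, ?_, rfl⟩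
    rw [LinearMap.mem_ker, map_smul]
    exact huni ⟨y, hyJ⟩ r hr
  have key : ∀ (x : R) (hxJ : x ∈ J),
      x ∈ (maximalIdeal R ^ (t + k) : Ideal R) → gE ⟨x, hxJ⟩ = 0 := by
    intro x hxJ hxm
    have htop : (maximalIdeal R ^ (t + k) • ⊤ : Submodule R R)
        = (maximalIdeal R ^ (t + k) : Ideal R) := by simp
    have hx1 : x ∈ (maximalIdeal R ^ (t + k) • ⊤ : Submodule R R) := by
      rw [htop]; exact hxm
    have hx' : x ∈ (maximalIdeal R ^ (t + k) • ⊤ ⊓ (J : Submodule R R)) := ⟨hx1, hxJ⟩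
    obtain ⟨y, hy, hyx⟩ := hsub hx'
    have hxy : (⟨x, hxJ⟩ : ↥J) = y := Subtype.ext hyx.symm
    rw [hxy]
    exact hy
  set Jm : Submodule R R := (maximalIdeal R ^ (t + k) : Ideal R) with hJm
  set ρ : ↥J →ₗ[R] R ⧸ Jm := Jm.mkQ ∘ₗ J.subtype with hρ
  have hkerρ : LinearMap.ker ρ ≤ LinearMap.ker gE := by
    intro x hxk
    rw [LinearMap.mem_ker] at hxk ⊢
    have hxm : (x : R) ∈ Jm := by
      rwa [hρ, LinearMap.comp_apply, Submodule.mkQ_apply, Submodule.Quotient.mk_eq_zero] at hxk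
    have := key (x : R) x.2 hxm
    rwa [Subtype.coe_eta] at this
  set jj : (↥J ⧸ LinearMap.ker ρ) →ₗ[R] R ⧸ Jm := (LinearMap.ker ρ).liftQ ρ le_rfl with hjj
  have hjinj : Function.Injective jj := by
    intro a b hab
    obtain ⟨x, rfl⟩ := Submodule.Quotient.mk_surjective _ a
    obtain ⟨y, rfl⟩ := Submodule.Quotient.mk_surjective _ b
    rw [hjj, Submodule.liftQ_apply, Submodule.liftQ_apply] at hab
    rw [Submodule.Quotient.eq]
    rw [LinearMap.mem_ker, map_sub, hab, sub_self]
  set g₂ : (↥J ⧸ LinearMap.ker ρ) →ₗ[R] E := (LinearMap.ker ρ).liftQ gE hkerρ with hg₂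
  obtain ⟨hmap, hhm⟩ := hE.out jj hjinj g₂
  have htor : ∀ c : R ⧸ Jm, hmap c ∈ torsionSub R E := by
    intro c
    obtain ⟨s, rfl⟩ := Submodule.Quotient.mk_surjective _ c
    refine ⟨t + k, fun r hr => ?_⟩
    have h1 : r • (Submodule.Quotient.mk s : R ⧸ Jm) = Submodule.Quotient.mk (r • s) :=
      (Submodule.Quotient.mk_smul Jm r s).symm
    have h2 : (Submodule.Quotient.mk (r • s) : R ⧸ Jm) = 0 := by
      rw [Submodule.Quotient.mk_eq_zero]
      have : r * s ∈ (maximalIdeal R ^ (t + k) : Ideal R) :=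
        Ideal.mul_mem_right s _ hr
      simpa [hJm, smul_eq_mul] using this
    rw [← map_smul, h1, h2, map_zero]
  refine ⟨LinearMap.codRestrict (torsionSub R E) (hmap ∘ₗ Jm.mkQ) (fun c => htor _), ?_⟩
  intro x hxJ
  apply Subtype.ext
  show hmap (Jm.mkQ x) = (g ⟨x, hxJ⟩ : E)
  have h1 : Jm.mkQ x = jj (Submodule.Quotient.mk ⟨x, hxJ⟩) := by
    rw [hjj, Submodule.liftQ_apply]
    rfl
  rw [h1, hhm, hg₂, Submodule.liftQ_apply]
  rfl

theorem torsion_top [IsNoetherianRing R] {e : ResidueField R →ₗ[R] E} (he : IsInjEnvelope e)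
    (x : E) : ∃ n : ℕ, ∀ r ∈ maximalIdeal R ^ n, r • x = 0 := by
  set T := torsionSub R E with hT
  have hET : Module.Injective R ↥T := Module.Baer.injective (torsion_baer he.2.1)
  obtain ⟨π, hπ⟩ := hET.out T.subtype (Submodule.injective_subtype T) LinearMap.id
  set σ : E →ₗ[R] E := T.subtype ∘ₗ π with hσ
  have hσT : ∀ y ∈ T, σ y = y := by
    intro y hy
    have h1 := hπ ⟨y, hy⟩
    calc σ y = (π (T.subtype ⟨y, hy⟩) : E) := rfl
    _ = ((⟨y, hy⟩ : ↥T) : E) := by rw [h1]; rfl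
    _ = y := rfl
  have hrange : LinearMap.range e ≤ T := by
    rintro _ ⟨y, rfl⟩
    refine ⟨1, fun r hr => ?_⟩
    rw [pow_one] at hr
    have h0 : residue R r = 0 := Ideal.Quotient.eq_zero_iff_mem.2 hr
    have h1 : r • y = 0 := by
      rw [Algebra.smul_def, IsLocalRing.ResidueField.algebraMap_eq, h0, zero_mul]
    rw [← map_smul, h1, map_zero]
  have hKbot : LinearMap.ker σ = ⊥ := by
    refine he.2.2 _ ?_
    rw [eq_bot_iff]
    rintro y ⟨hk, hr⟩
    have h2 : σ y = y := hσT y (hrange hr)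
    have h3 : y = 0 := by rw [← h2, LinearMap.mem_ker.1 hk]
    exact (Submodule.mem_bot R).2 h3
  have h5 : σ x ∈ T := by
    rw [hσ]
    exact Submodule.coe_mem (π x)
  have h6 : σ (σ x - x) = 0 := by rw [map_sub, hσT (σ x) h5, sub_self]
  have h7 : σ x - x = 0 := by
    have hmem := LinearMap.mem_ker.2 h6
    rw [hKbot, Submodule.mem_bot] at hmem
    exact hmem
  have h8 : σ x = x := sub_eq_zero.1 h7
  exact h8 ▸ h5

theorem mem_range_of_smul_maximalIdeal {e : ResidueField R →ₗ[R] E} (he : IsInjEnvelope e)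
    (x : E) (hx : ∀ r ∈ maximalIdeal R, r • x = 0) : x ∈ LinearMap.range e := by
  by_cases h0 : x = 0
  · rw [h0]; exact Submodule.zero_mem _
  have hne : Submodule.span R {x} ⊓ LinearMap.range e ≠ ⊥ := by
    intro hbot
    have h1 := he.2.2 (Submodule.span R {x}) hbot
    have hx0 : x = 0 := by simpa using h1
    exact h0 hx0
  obtain ⟨y, hy, hy0⟩ := (Submodule.ne_bot_iff _).1 hne
  obtain ⟨hy1, hy2⟩ := Submodule.mem_inf.1 hy
  obtain ⟨c, rfl⟩ := Submodule.mem_span_singleton.1 hy1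
  have hcu : IsUnit c := by
    by_contra hcu
    exact hy0 (hx c ((IsLocalRing.mem_maximalIdeal c).2 (mem_nonunits_iff.2 hcu)))
  obtain ⟨u, rfl⟩ := hcu
  have h2 : x = (↑u⁻¹ : R) • ((u : R) • x) := by
    rw [smul_smul, Units.inv_mul, one_smul]
  rw [h2]
  exact Submodule.smul_mem _ _ hy2

theorem evalSurj_residueField {e : ResidueField R →ₗ[R] E} (he : IsInjEnvelope e) :
    EvalSurj R E (ResidueField R) := by
  intro z
  have hsmul1 : ∀ r : R, r ∈ maximalIdeal R → ∀ y : ResidueField R, r • y = 0 := by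
    intro r hr y
    have h0 : residue R r = 0 := Ideal.Quotient.eq_zero_iff_mem.2 hr
    rw [Algebra.smul_def, IsLocalRing.ResidueField.algebraMap_eq, h0, zero_mul]
  have hform : ∀ f : ResidueField R →ₗ[R] E, ∃ rf : R, f = rf • e := by
    intro f
    have h1 : ∀ r ∈ maximalIdeal R, r • f 1 = 0 := by
      intro r hr
      rw [← map_smul, hsmul1 r hr 1, map_zero]
    obtain ⟨cf, hcf⟩ := mem_range_of_smul_maximalIdeal he (f 1) h1
    obtain ⟨rf, hrf⟩ := Ideal.Quotient.mk_surjective (I := maximalIdeal R) cf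
    refine ⟨rf, ?_⟩
    apply LinearMap.ext
    intro y
    obtain ⟨s, rfl⟩ := Ideal.Quotient.mk_surjective (I := maximalIdeal R) y
    have h2 : (Ideal.Quotient.mk (maximalIdeal R) s) = s • (1 : ResidueField R) := by
      rw [Algebra.smul_def, IsLocalRing.ResidueField.algebraMap_eq, mul_one]
      rfl
    rw [h2, map_smul, ← hcf, LinearMap.smul_apply, map_smul, smul_smul]
    have h2r : (Ideal.Quotient.mk (maximalIdeal R)) rf = rf • (1 : ResidueField R) := by
      rw [Algebra.smul_def, IsLocalRing.ResidueField.algebraMap_eq, mul_one]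
      rfl
    rw [← hrf, h2r, map_smul, smul_smul, mul_comm]
  have h3 : ∀ r ∈ maximalIdeal R, r • z e = 0 := by
    intro r hr
    have h4 : r • e = (0 : ResidueField R →ₗ[R] E) := by
      apply LinearMap.ext
      intro y
      rw [LinearMap.smul_apply, ← map_smul, hsmul1 r hr y, map_zero]
      rfl
    rw [← map_smul, h4, map_zero]
  obtain ⟨c, hc⟩ := mem_range_of_smul_maximalIdeal he (z e) h3
  refine ⟨c, fun f => ?_⟩
  obtain ⟨rf, rfl⟩ := hform f
  rw [map_smul, LinearMap.smul_apply, ← hc]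

end MatlisTorsion


section MatlisScalar

open IsLocalRing

variable {R : Type u} [CommRing R] [IsLocalRing R]
variable {E : Type u} [AddCommGroup E] [Module R E]

theorem evalSurj_of_fg_smul_max {e : ResidueField R →ₗ[R] E} (he : IsInjEnvelope e)
    {L : Type u} [AddCommGroup L] [Module R L]
    (hkill : ∀ r ∈ maximalIdeal R, ∀ x : L, r • x = 0)
    (hfg : (⊤ : Submodule R L).FG) : EvalSurj R E L := by
  classical
  have hE := he.2.1
  -- cyclic case
  have hcyc : ∀ x : L, EvalSurj R E ↥(Submodule.span R {x}) := by
    intro x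
    set W := Submodule.span R ({x} : Set L) with hW
    have hxW : x ∈ W := Submodule.mem_span_singleton_self x
    set φ : R →ₗ[R] ↥W := LinearMap.toSpanSingleton R ↥W ⟨x, hxW⟩ with hφ
    have hsur : Function.Surjective φ := by
      rintro ⟨y, hy⟩
      obtain ⟨a, ha⟩ := Submodule.mem_span_singleton.1 hy
      exact ⟨a, Subtype.ext (by simpa [hφ, LinearMap.toSpanSingleton_apply] using ha)⟩
    set eqv := LinearMap.quotKerEquivOfSurjective φ hsur
    by_cases hker : LinearMap.ker φ = ⊤
    · haveI : Subsingleton (R ⧸ LinearMap.ker φ) :=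
        Submodule.Quotient.subsingleton_iff.2 hker
      exact EvalSurj.congr hE eqv EvalSurj.of_subsingleton
    · have hle : maximalIdeal R ≤ LinearMap.ker φ := by
        intro r hr
        rw [LinearMap.mem_ker, hφ, LinearMap.toSpanSingleton_apply]
        exact Subtype.ext (hkill r hr x)
      have heq : maximalIdeal R = LinearMap.ker φ :=
        (IsLocalRing.maximalIdeal.isMaximal R).eq_of_le hker hle
      have hres : EvalSurj R E (R ⧸ LinearMap.ker φ) := by
        rw [← heq]
        exact evalSurj_residueField he
      exact EvalSurj.congr hE eqv hres
  -- induction on finitely generated submodules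
  have hind : ∀ N : Submodule R L, N.FG → EvalSurj R E ↥N := by
    intro N hN
    refine Submodule.fg_induction (motive := fun N _ => EvalSurj R E ↥N) hcyc ?_ N hN
    intro N₁ N₂ _ _ h₁ h₂
    set ι₁ := Submodule.inclusion (le_sup_left : N₁ ≤ N₁ ⊔ N₂) with hι₁
    set W : Submodule R ↥(N₁ ⊔ N₂) := LinearMap.range ι₁ with hWdef
    have hWeq : EvalSurj R E ↥W :=
      EvalSurj.congr hE
        (LinearEquiv.ofInjective ι₁ (Submodule.inclusion_injective _)) h₁
    have hquot : EvalSurj R E (↥(N₁ ⊔ N₂) ⧸ W) := by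
      set π₂ := W.mkQ ∘ₗ Submodule.inclusion (le_sup_right : N₂ ≤ N₁ ⊔ N₂) with hπ₂
      have hsur : Function.Surjective π₂ := by
        intro q
        obtain ⟨w, rfl⟩ := W.mkQ_surjective q
        obtain ⟨x, hx⟩ := w
        obtain ⟨y, hy, z, hz, hyz⟩ := Submodule.mem_sup.1 hx
        refine ⟨⟨z, hz⟩, ?_⟩
        rw [hπ₂, LinearMap.comp_apply, Submodule.mkQ_apply, Submodule.mkQ_apply,
          Submodule.Quotient.eq]
        refine ⟨-⟨y, hy⟩, ?_⟩
        apply Subtype.ext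
        show -y = z - x
        rw [← hyz]
        abel
      exact EvalSurj.of_surjective hE π₂ hsur h₂
    exact EvalSurj.extension hE W hWeq hquot
  have htop := hind ⊤ hfg
  exact EvalSurj.congr hE (Submodule.topEquiv) htop

theorem evalSurj_quot_pow [IsNoetherianRing R] {e : ResidueField R →ₗ[R] E}
    (he : IsInjEnvelope e) (n : ℕ) :
    EvalSurj R E (R ⧸ (maximalIdeal R ^ n : Ideal R)) := by
  induction n with
  | zero =>
      haveI : Subsingleton (R ⧸ (maximalIdeal R ^ 0 : Ideal R)) := by
        refine Submodule.Quotient.subsingleton_iff.2 ?_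
        rw [pow_zero, Ideal.one_eq_top]

      exact EvalSurj.of_subsingleton
  | succ n ih =>
      set S : Submodule R R := (maximalIdeal R ^ (n + 1) : Ideal R) with hS
      set T : Submodule R R := (maximalIdeal R ^ n : Ideal R) with hTd
      have hST : S ≤ T := Ideal.pow_le_pow_right (Nat.le_succ n)
      set W : Submodule R (R ⧸ S) := Submodule.map S.mkQ T with hWd
      have hWfg : (⊤ : Submodule R ↥W).FG :=
        (Submodule.fg_top W).2 ((IsNoetherian.noetherian T).map _)
      have hWkill : ∀ r ∈ maximalIdeal R, ∀ w : ↥W, r • w = 0 := by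
        rintro r hr ⟨w, hw⟩
        obtain ⟨x, hx, rfl⟩ := Submodule.mem_map.1 hw
        apply Subtype.ext
        show r • S.mkQ x = 0
        rw [← map_smul, Submodule.mkQ_apply, Submodule.Quotient.mk_eq_zero]
        have : x * r ∈ (maximalIdeal R ^ n) * maximalIdeal R := Ideal.mul_mem_mul hx hr
        rw [← pow_succ] at this
        simpa [hS, smul_eq_mul, mul_comm] using this
      have hW : EvalSurj R E ↥W := evalSurj_of_fg_smul_max he hWkill hWfg
      have hquot : EvalSurj R E ((R ⧸ S) ⧸ W) :=
        EvalSurj.congr he.2.1 (Submodule.quotientQuotientEquivQuotient S T hST).symm ih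
      exact EvalSurj.extension he.2.1 W hW hquot

theorem exists_smul_eq_of_linear [IsNoetherianRing R] {e : ResidueField R →ₗ[R] E}
    (he : IsInjEnvelope e) (hR : IsAdicComplete (maximalIdeal R) R) (φ : E →ₗ[R] E) :
    ∃ r : R, ∀ x : E, φ x = r • x := by
  classical
  have step : ∀ n : ℕ, ∃ rn : R, ∀ x : E,
      (∀ s ∈ maximalIdeal R ^ n, s • x = 0) → φ x = rn • x := by
    intro n
    obtain ⟨c, hc⟩ := evalSurj_quot_pow he n
      (φ ∘ₗ LinearMap.applyₗ (Submodule.Quotient.mk (1 : R)))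
    obtain ⟨rn, hrn⟩ := Submodule.Quotient.mk_surjective _ c
    refine ⟨rn, fun x hx => ?_⟩
    have hkerx : (maximalIdeal R ^ n : Ideal R) ≤
        LinearMap.ker (LinearMap.toSpanSingleton R E x) := by
      intro s hs
      rw [LinearMap.mem_ker, LinearMap.toSpanSingleton_apply]
      exact hx s hs
    set fx := (maximalIdeal R ^ n : Ideal R).liftQ (LinearMap.toSpanSingleton R E x) hkerx
      with hfx
    have h1 := hc fx
    have h2 : fx (Submodule.Quotient.mk 1) = x := by
      rw [hfx, Submodule.liftQ_apply, LinearMap.toSpanSingleton_apply, one_smul]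
    have h3 : fx c = rn • x := by
      rw [← hrn, hfx, Submodule.liftQ_apply, LinearMap.toSpanSingleton_apply]
    rw [LinearMap.comp_apply] at h1
    have h4 : LinearMap.applyₗ (Submodule.Quotient.mk (1 : R)) fx
        = fx (Submodule.Quotient.mk 1) := rfl
    rw [h4, h2] at h1
    rw [h1, h3]
  choose rr hrr using step
  have hdiff : ∀ p q : ℕ, p ≤ q → rr q - rr p ∈ maximalIdeal R ^ p := by
    intro p q hpq
    by_contra hmem
    have hne : (Submodule.Quotient.mk (rr q - rr p) :
        R ⧸ (maximalIdeal R ^ p : Ideal R)) ≠ 0 := by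
      rw [Ne, Submodule.Quotient.mk_eq_zero]
      exact hmem
    obtain ⟨f, hf⟩ := exists_apply_ne_zero he _ hne
    set x := f (Submodule.Quotient.mk 1) with hxdef
    have hmk : ∀ s : R, (Submodule.Quotient.mk s :
        R ⧸ (maximalIdeal R ^ p : Ideal R)) = s • Submodule.Quotient.mk (1 : R) := by
      intro s
      rw [← Submodule.Quotient.mk_smul, smul_eq_mul, mul_one]
    have hxtor : ∀ s ∈ maximalIdeal R ^ p, s • x = 0 := by
      intro s hs
      rw [hxdef, ← map_smul, ← hmk s]
      have : (Submodule.Quotient.mk s : R ⧸ (maximalIdeal R ^ p : Ideal R)) = 0 := by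
        rw [Submodule.Quotient.mk_eq_zero]
        exact hs
      rw [this, map_zero]
    have hq : φ x = rr q • x := hrr q x (fun s hs =>
      hxtor s (Ideal.pow_le_pow_right hpq hs))
    have hp : φ x = rr p • x := hrr p x hxtor
    have hzero : (rr q - rr p) • x = 0 := by
      rw [sub_smul, ← hq, ← hp, sub_self]
    have h4 : f (Submodule.Quotient.mk (rr q - rr p)) = (rr q - rr p) • x := by
      rw [hmk, map_smul]
    exact hf (by rw [h4, hzero])
  have htops : ∀ p : ℕ, (maximalIdeal R ^ p • ⊤ : Submodule R R)
      = (maximalIdeal R ^ p : Ideal R) := fun p => by simp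
  have hcauchy : ∀ {p q : ℕ}, p ≤ q →
      rr p ≡ rr q [SMOD (maximalIdeal R ^ p • ⊤ : Submodule R R)] := by
    intro p q hpq
    rw [SModEq.sub_mem, htops]
    have h5 := hdiff p q hpq
    have h6 : rr p - rr q = -(rr q - rr p) := by ring
    rw [h6]
    exact neg_mem h5
  obtain ⟨Lr, hLr⟩ := hR.toIsPrecomplete.prec' rr hcauchy
  refine ⟨Lr, fun x => ?_⟩
  obtain ⟨n, hn⟩ := torsion_top he x
  have h5 : φ x = rr n • x := hrr n x hn
  have hmem : Lr - rr n ∈ maximalIdeal R ^ n := by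
    have h7 := hLr n
    rw [SModEq.sub_mem, htops] at h7
    have h8 : Lr - rr n = -(rr n - Lr) := by ring
    rw [h8]
    exact neg_mem h7
  have h6 : Lr • x - rr n • x = 0 := by
    rw [← sub_smul]
    exact hn _ hmem
  rw [h5, ← sub_eq_zero.1 h6]

theorem evalSurj_R [IsNoetherianRing R] {e : ResidueField R →ₗ[R] E}
    (he : IsInjEnvelope e) (hR : IsAdicComplete (maximalIdeal R) R) : EvalSurj R E R := by
  letI : Module R (R →ₗ[R] E) := LinearMap.module
  intro z
  set φ : E →ₗ[R] E :=
    z ∘ₗ (LinearMap.ringLmapEquivSelf R R E).symm.toLinearMap with hφ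
  obtain ⟨r, hr⟩ := exists_smul_eq_of_linear he hR φ
  refine ⟨r, fun f => ?_⟩
  have h0 : (LinearMap.ringLmapEquivSelf R R E).symm (f 1) = f := by
    rw [LinearEquiv.symm_apply_eq]
    rfl
  have h2 : z f = φ (f 1) := by
    rw [hφ, LinearMap.comp_apply, LinearEquiv.coe_toLinearMap, h0]
  rw [h2, hr (f 1), ← map_smul, smul_eq_mul, mul_one]

theorem evalSurj_E [IsNoetherianRing R] {e : ResidueField R →ₗ[R] E}
    (he : IsInjEnvelope e) (hR : IsAdicComplete (maximalIdeal R) R) : EvalSurj R E E := by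
  intro z
  refine ⟨z LinearMap.id, fun f => ?_⟩
  obtain ⟨r, hr⟩ := exists_smul_eq_of_linear he hR f
  have h1 : f = r • LinearMap.id := by
    apply LinearMap.ext
    intro v
    rw [hr v]
    rfl
  rw [h1, map_smul]
  rfl

theorem evalSurj_of_finite [IsNoetherianRing R] {e : ResidueField R →ₗ[R] E}
    (he : IsInjEnvelope e) (hR : IsAdicComplete (maximalIdeal R) R)
    {M : Type u} [AddCommGroup M] [Module R M] (hM : Module.Finite R M) :
    EvalSurj R E M := by
  obtain ⟨n, s, hs⟩ := Module.Finite.exists_fin (R := R) (M := M)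
  have hsur : Function.Surjective (Fintype.linearCombination R s) := by
    rw [← LinearMap.range_eq_top, Fintype.range_linearCombination, hs]
  exact EvalSurj.of_surjective he.2.1 _ hsur (EvalSurj.pi R (evalSurj_R he hR) n)

theorem exists_scalar_comb [IsNoetherianRing R] {e : ResidueField R →ₗ[R] E}
    (he : IsInjEnvelope e) (hR : IsAdicComplete (maximalIdeal R) R)
    {N : Type u} [AddCommGroup N] [Module R N] {ι : Type u} [Fintype ι] [DecidableEq ι]
    (h : ι → (N →ₗ[R] E)) (g : N →ₗ[R] E) (hg : ∀ x, (∀ l, h l x = 0) → g x = 0) :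
    ∃ r : ι → R, ∀ x, g x = ∑ l, r l • h l x := by
  classical
  set H : N →ₗ[R] (ι → E) := LinearMap.pi h with hH
  have hker : LinearMap.ker H ≤ LinearMap.ker g := by
    intro x hx
    rw [LinearMap.mem_ker] at hx ⊢
    exact hg x fun l => congrFun hx l
  set jj := (LinearMap.ker H).liftQ H le_rfl with hjj
  have hinj : Function.Injective jj := by
    intro a b hab
    obtain ⟨x, rfl⟩ := Submodule.Quotient.mk_surjective _ a
    obtain ⟨y, rfl⟩ := Submodule.Quotient.mk_surjective _ b
    rw [hjj, Submodule.liftQ_apply, Submodule.liftQ_apply] at hab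
    rw [Submodule.Quotient.eq]
    rw [LinearMap.mem_ker, map_sub, hab, sub_self]
  obtain ⟨ζ, hζ⟩ := he.2.1.out jj hinj ((LinearMap.ker H).liftQ g hker)
  have hζ' : ∀ x : N, ζ (H x) = g x := by
    intro x
    have h1 : H x = jj (Submodule.Quotient.mk x) := by
      rw [hjj, Submodule.liftQ_apply]
    rw [h1, hζ, Submodule.liftQ_apply]
  have comp : ∀ l : ι, ∃ r : R, ∀ v : E, ζ (Pi.single l v) = r • v := by
    intro l
    obtain ⟨r, hr⟩ := exists_smul_eq_of_linear he hR
      (ζ ∘ₗ LinearMap.single R (fun _ => E) l)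
    exact ⟨r, fun v => hr v⟩
  choose r hrs using comp
  refine ⟨r, fun x => ?_⟩
  have h2 : H x = ∑ l, Pi.single l (h l x) := by
    have := Finset.univ_sum_single (H x)
    rw [← this]
    rfl
  rw [← hζ' x, h2, map_sum]
  exact Finset.sum_congr rfl fun l _ => hrs l (h l x)

end MatlisScalar

/-- Let `(R, m, k)` be a commutative noetherian local ring that is
`m`-adically complete and `A` a Noether `R`-algebra. Then `Hom_R(-, E_R(k))` sends
finitely generated right `A`-modules to artinian left `A`-modules and artinian left
`A`-modules to finitely generated right `A`-modules, and the canonical evaluation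
maps `M → Hom_R(Hom_R(M, E_R(k)), E_R(k))` are isomorphisms on both categories
(Matlis duality). -/
theorem matlis_duality_over_complete_local_ring
    {R A : Type u} [CommRing R] [IsNoetherianRing R] [IsLocalRing R]
    [Ring A] [Algebra R A] [Module.Finite R A]
    (hR : IsAdicComplete (IsLocalRing.maximalIdeal R) R)
    (E : Type u) [AddCommGroup E] [Module R E]
    (e : IsLocalRing.ResidueField R →ₗ[R] E) (he : IsInjEnvelope e) :
    (∀ (M : Type u) [AddCommGroup M] [Module R M] [Module Aᵐᵒᵖ M]
      [IsScalarTower R Aᵐᵒᵖ M], Module.Finite Aᵐᵒᵖ M →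
        IsArtinian A (M →ₗ[R] E) ∧ Function.Bijective (evalRight R A M E)) ∧
    (∀ (N : Type u) [AddCommGroup N] [Module R N] [Module A N]
      [IsScalarTower R A N], IsArtinian A N →
        Module.Finite Aᵐᵒᵖ (N →ₗ[R] E) ∧ Function.Bijective (evalLeft R A N E)) := by
  classical
  haveI : Module.Finite R Aᵐᵒᵖ :=
    Module.Finite.equiv (MulOpposite.opLinearEquiv R : A ≃ₗ[R] Aᵐᵒᵖ)
  obtain ⟨nA, aA, haA⟩ := Module.Finite.exists_fin (R := R) (M := A)
  constructor
  · -- Part 1: finitely generated right modules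
    intro M _ _ _ _ hMfin
    haveI := hMfin
    haveI hMR : Module.Finite R M := Module.Finite.trans Aᵐᵒᵖ M
    haveI hMnoeth : IsNoetherian R M := isNoetherian_of_isNoetherianRing_of_finite R M
    -- the annihilator-in-M of a set of functionals
    set perp : Submodule A (M →ₗ[R] E) → Submodule R M := fun X =>
      { carrier := {x | ∀ g ∈ X, g x = 0}
        add_mem' := fun {x y} hx hy g hg => by rw [map_add, hx g hg, hy g hg, add_zero]
        zero_mem' := fun g _ => map_zero g
        smul_mem' := fun c x hx g hg => by rw [map_smul, hx g hg, smul_zero] } with hperpdef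
    have hdp : ∀ (X : Submodule A (M →ₗ[R] E)) (g : M →ₗ[R] E),
        (∀ x ∈ perp X, g x = 0) → g ∈ X := by
      intro X g hg
      by_contra hgX
      set XR : Submodule R (M →ₗ[R] E) := X.restrictScalars R with hXR
      have hne : (Submodule.Quotient.mk g : (M →ₗ[R] E) ⧸ XR) ≠ 0 := by
        rw [Ne, Submodule.Quotient.mk_eq_zero]
        exact fun h => hgX h
      obtain ⟨ζ, hζ⟩ := exists_apply_ne_zero he _ hne
      set z : (M →ₗ[R] E) →ₗ[R] E := ζ ∘ₗ XR.mkQ with hz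
      obtain ⟨u, hu⟩ := evalSurj_of_finite he hR hMR z
      have huX : u ∈ perp X := by
        intro g' hg'
        have h1 : z g' = 0 := by
          rw [hz, LinearMap.comp_apply, Submodule.mkQ_apply]
          have : (Submodule.Quotient.mk g' : (M →ₗ[R] E) ⧸ XR) = 0 :=
            (Submodule.Quotient.mk_eq_zero _).2 hg'
          rw [this, map_zero]
        rw [← hu g', h1]
      have h2 : z g = 0 := by rw [hu g, hg u huX]
      apply hζ
      rw [← Submodule.mkQ_apply]
      exact h2
    constructor
    · -- artinian-ness of the dual
      rw [← monotone_stabilizes_iff_artinian]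
      intro f
      set gch : ℕ →o Submodule R M :=
        ⟨fun n => perp (OrderDual.ofDual (f n)), by
          intro p q hpq x hx g hg
          exact hx g (f.monotone hpq hg)⟩ with hgch
      obtain ⟨n, hn⟩ := monotone_stabilizes_iff_noetherian.2 hMnoeth gch
      refine ⟨n, fun m hm => ?_⟩
      have hperpeq : perp (OrderDual.ofDual (f n)) = perp (OrderDual.ofDual (f m)) :=
        hn m hm
      have hle1 : OrderDual.ofDual (f m) ≤ OrderDual.ofDual (f n) := f.monotone hm
      have hle2 : OrderDual.ofDual (f n) ≤ OrderDual.ofDual (f m) := by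
        intro g hg
        refine hdp (OrderDual.ofDual (f m)) g ?_
        intro x hx
        have hx' : x ∈ perp (OrderDual.ofDual (f n)) := by
          rw [hperpeq]
          exact hx
        exact hx' g hg
      have h9 : OrderDual.ofDual (f n) = OrderDual.ofDual (f m) := le_antisymm hle2 hle1
      exact h9
    · -- bijectivity of the evaluation
      constructor
      · intro x y hxy
        have h0 : ∀ g : M →ₗ[R] E, g (x - y) = 0 := by
          intro g
          have h1 : evalRight R A M E x g = evalRight R A M E y g := by rw [hxy]
          have h2 : g x = g y := h1
          rw [map_sub, h2, sub_self]
        have := eval_injective he h0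
        have hxy2 : x - y = 0 := this
        rw [← sub_eq_zero]
        exact hxy2
      · intro z
        obtain ⟨x, hx⟩ := evalSurj_of_finite he hR hMR z
        refine ⟨x, ?_⟩
        apply LinearMap.ext
        intro g
        exact (hx g).symm
  · -- Part 2: artinian left modules
    intro N _ _ _ _ hNart
    haveI := hNart
    -- N is m-power torsion
    have htorN : ∀ x : N, ∃ n : ℕ, ∀ r ∈ IsLocalRing.maximalIdeal R ^ n, r • x = 0 := by
      intro x
      set θ : A →ₗ[R] N := (LinearMap.toSpanSingleton A N x).restrictScalars R with hθ
      set M₀ : Submodule R N := LinearMap.range θ with hM₀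
      have hstable : ∀ (a : A) (y : N), y ∈ M₀ → a • y ∈ M₀ := by
        rintro a _ ⟨b, rfl⟩
        refine ⟨a * b, ?_⟩
        show (a * b) • x = a • (b • x)
        rw [mul_smul]
      set Wfun : ℕ → Submodule A N := fun n =>
        { carrier := ((IsLocalRing.maximalIdeal R ^ n : Ideal R) • M₀ : Submodule R N)
          add_mem' := fun {x y} hx hy => Submodule.add_mem _ hx hy
          zero_mem' := Submodule.zero_mem _
          smul_mem' := by
            intro a y hy
            refine Submodule.smul_induction_on hy ?_ ?_
            · intro r hr w hw
              rw [smul_comm]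
              exact Submodule.smul_mem_smul hr (hstable a w hw)
            · intro u v hu hv
              rw [smul_add]
              exact Submodule.add_mem _ hu hv } with hWfun
      set ch : ℕ →o (Submodule A N)ᵒᵈ :=
        ⟨fun n => OrderDual.toDual (Wfun n), by
          intro p q hpq
          show Wfun q ≤ Wfun p
          intro y hy
          exact Submodule.smul_mono_left (Ideal.pow_le_pow_right hpq) hy⟩ with hch
      obtain ⟨n, hn⟩ := monotone_stabilizes_iff_artinian.2 hNart ch
      have heqW : Wfun n = Wfun (n + 1) := by
        have h9 := hn (n + 1) (Nat.le_succ n)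
        exact h9
      have heqR : ((IsLocalRing.maximalIdeal R ^ n : Ideal R) • M₀ : Submodule R N)
          = ((IsLocalRing.maximalIdeal R ^ (n + 1) : Ideal R) • M₀ : Submodule R N) := by
        ext y
        constructor
        · intro h
          exact (le_of_eq heqW) (show y ∈ Wfun n from h)
        · intro h
          exact (le_of_eq heqW.symm) (show y ∈ Wfun (n + 1) from h)
      haveI : IsNoetherian R A := isNoetherian_of_isNoetherianRing_of_finite R A
      have hfg : ((IsLocalRing.maximalIdeal R ^ n : Ideal R) • M₀).FG := by
        have h1 : (IsLocalRing.maximalIdeal R ^ n : Ideal R) • M₀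
            = Submodule.map θ ((IsLocalRing.maximalIdeal R ^ n : Ideal R) • ⊤) := by
          rw [Submodule.map_smul'', Submodule.map_top]
        rw [h1]
        exact (IsNoetherian.noetherian _).map θ
      have hsmul : ((IsLocalRing.maximalIdeal R ^ n : Ideal R) • M₀ : Submodule R N) ≤
          IsLocalRing.maximalIdeal R • ((IsLocalRing.maximalIdeal R ^ n : Ideal R) • M₀) := by
        rw [← Submodule.smul_assoc, smul_eq_mul, ← pow_succ']
        exact le_of_eq heqR
      have hbot := Submodule.eq_bot_of_le_smul_of_le_jacobson_bot (IsLocalRing.maximalIdeal R)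
        _ hfg hsmul
        (by rw [IsLocalRing.jacobson_eq_maximalIdeal (⊥ : Ideal R) bot_ne_top])
      refine ⟨n, fun r hr => ?_⟩
      have hx0 : x ∈ M₀ := ⟨1, by show (1 : A) • x = x; rw [one_smul]⟩
      have hmem : r • x ∈ (IsLocalRing.maximalIdeal R ^ n : Ideal R) • M₀ :=
        Submodule.smul_mem_smul hr hx0
      rw [hbot] at hmem
      simpa using hmem
    -- finite generation of the dual over Aᵐᵒᵖ
    set perpF : Finset (N →ₗ[R] E) → Submodule A N := fun F =>
      { carrier := {x | ∀ g ∈ F, ∀ b : A, g (b • x) = 0}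
        add_mem' := fun {x y} hx hy g hg b => by
          rw [smul_add, map_add, hx g hg b, hy g hg b, add_zero]
        zero_mem' := fun g _ b => by rw [smul_zero, map_zero]
        smul_mem' := fun a x hx g hg b => by
          rw [← mul_smul]
          exact hx g hg (b * a) } with hperpF
    obtain ⟨P, hPmem, hmin⟩ := WellFounded.has_min ((isArtinian_iff A N).1 hNart)
      (Set.range perpF) ⟨perpF ∅, ⟨∅, rfl⟩⟩
    obtain ⟨F₀, rfl⟩ := hPmem
    have hbotF : ∀ x ∈ perpF F₀, x = 0 := by
      intro x hx
      by_contra hx0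
      obtain ⟨g, hgx⟩ := exists_apply_ne_zero he x hx0
      have hlt : perpF (insert g F₀) < perpF F₀ := by
        refine lt_of_le_of_ne ?_ ?_
        · intro y hy g' hg' b
          exact hy g' (Finset.mem_insert_of_mem hg') b
        · intro hEq
          have h1 : x ∈ perpF (insert g F₀) := by
            rw [hEq]
            exact hx
          have h2 := h1 g (Finset.mem_insert_self g F₀) 1
          rw [one_smul] at h2
          exact hgx h2
      exact hmin _ ⟨insert g F₀, rfl⟩ hlt
    have hspan : Submodule.span Aᵐᵒᵖ (F₀ : Set (N →ₗ[R] E)) = ⊤ := by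
      rw [eq_top_iff]
      intro g _
      set hfam : (↥(F₀ : Set (N →ₗ[R] E)) × ULift.{u} (Fin nA)) → (N →ₗ[R] E) :=
        fun p => (p.1 : N →ₗ[R] E) ∘ₗ DistribMulAction.toLinearMap R N (aA p.2.down)
        with hhfam
      have hcond : ∀ x, (∀ l, hfam l x = 0) → g x = 0 := by
        intro x hl
        have hxperp : x ∈ perpF F₀ := by
          intro g' hg' b
          have hlin : ∀ b' ∈ Submodule.span R (Set.range aA), g' (b' • x) = 0 := by
            intro b' hb'
            induction hb' using Submodule.span_induction with
            | mem y hy =>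
                obtain ⟨i, rfl⟩ := hy
                exact hl ⟨⟨g', hg'⟩, ULift.up i⟩
            | zero =>
                rw [zero_smul, map_zero]
            | add y w _ _ hy' hw' =>
                rw [add_smul, map_add, hy', hw', add_zero]
            | smul c y _ hy' =>
                rw [smul_assoc, map_smul, hy', smul_zero]
          exact hlin b (haA ▸ Submodule.mem_top)
        rw [hbotF x hxperp, map_zero]
      obtain ⟨r, hr⟩ := exists_scalar_comb he hR hfam g hcond
      have hgeq : g = ∑ l, r l • hfam l := by
        apply LinearMap.ext
        intro x
        rw [hr x, LinearMap.sum_apply]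
        rfl
      rw [hgeq]
      refine Submodule.sum_mem _ ?_
      intro l _
      have h1 : hfam l ∈ Submodule.span Aᵐᵒᵖ (F₀ : Set (N →ₗ[R] E)) := by
        have h2 : hfam l = (op (aA l.2.down)) • ((l.1 : N →ₗ[R] E)) := rfl
        rw [h2]
        exact Submodule.smul_mem _ _ (Submodule.subset_span l.1.2)
      have h3 : r l • hfam l = (algebraMap R Aᵐᵒᵖ (r l)) • hfam l :=
        (algebraMap_smul Aᵐᵒᵖ (r l) (hfam l)).symm
      rw [h3]
      exact Submodule.smul_mem _ _ h1
    haveI hfinMop : Module.Finite Aᵐᵒᵖ (N →ₗ[R] E) := Module.finite_def.2 ⟨F₀, hspan⟩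
    refine ⟨hfinMop, ?_, ?_⟩
    · -- injectivity of evaluation
      intro x y hxy
      have h0 : ∀ g : N →ₗ[R] E, g (x - y) = 0 := by
        intro g
        have h1 : evalLeft R A N E x g = evalLeft R A N E y g := by rw [hxy]
        have h2 : g x = g y := h1
        rw [map_sub, h2, sub_self]
      have h3 := eval_injective he h0
      rw [← sub_eq_zero]
      exact h3
    · -- surjectivity of evaluation
      haveI hfinR : Module.Finite R (N →ₗ[R] E) := Module.Finite.trans Aᵐᵒᵖ _
      obtain ⟨t, gg, hgg⟩ := Module.Finite.exists_fin (R := R) (M := (N →ₗ[R] E))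
      set θ : N →ₗ[R] (Fin t → E) := LinearMap.pi gg with hθ2
      intro z
      obtain ⟨u, hu⟩ := (EvalSurj.pi E (evalSurj_E he hR) t) (z ∘ₗ LinearMap.lcomp R E θ)
      have hu' : ∀ hmap : (Fin t → E) →ₗ[R] E, z (hmap ∘ₗ θ) = hmap u := by
        intro hmap
        have := hu hmap
        rwa [LinearMap.comp_apply, LinearMap.lcomp_apply'] at this
      have hurange : u ∈ LinearMap.range θ := by
        by_contra hur
        have hne : (Submodule.Quotient.mk u : (Fin t → E) ⧸ LinearMap.range θ) ≠ 0 := by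
          rw [Ne, Submodule.Quotient.mk_eq_zero]
          exact hur
        obtain ⟨ζ, hζ⟩ := exists_apply_ne_zero he _ hne
        have h1 : (ζ ∘ₗ (LinearMap.range θ).mkQ) ∘ₗ θ = 0 := by
          apply LinearMap.ext
          intro y
          rw [LinearMap.comp_apply, LinearMap.comp_apply, Submodule.mkQ_apply]
          have : (Submodule.Quotient.mk (θ y) : (Fin t → E) ⧸ LinearMap.range θ) = 0 :=
            (Submodule.Quotient.mk_eq_zero _).2 ⟨y, rfl⟩
          rw [this, map_zero]
          rfl
        have h2 := hu' (ζ ∘ₗ (LinearMap.range θ).mkQ)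
        rw [h1, map_zero] at h2
        apply hζ
        rw [← Submodule.mkQ_apply, ← LinearMap.comp_apply, ← h2]
      obtain ⟨x, hx⟩ := hurange
      refine ⟨x, ?_⟩
      apply LinearMap.ext
      intro f
      have hf : f ∈ Submodule.span R (Set.range gg) := hgg ▸ Submodule.mem_top
      obtain ⟨c, hc⟩ := (Submodule.mem_span_range_iff_exists_fun R).1 hf
      set hmap : (Fin t → E) →ₗ[R] E := ∑ i, c i • LinearMap.proj i with hhm
      have h3 : hmap ∘ₗ θ = f := by
        apply LinearMap.ext
        intro y
        rw [← hc]
        rw [LinearMap.comp_apply, hhm, LinearMap.sum_apply, LinearMap.sum_apply]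
        refine Finset.sum_congr rfl fun i _ => ?_
        rw [LinearMap.smul_apply, LinearMap.smul_apply, LinearMap.proj_apply]
        rfl
      have h4 := hu' hmap
      rw [h3] at h4
      have h5 : hmap u = hmap (θ x) := by rw [hx]
      have h6 : hmap (θ x) = f x := by
        rw [← h3]
        rfl
      show f x = z f
      rw [h4, h5, h6]
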